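/- Let n ≥ 5, let V = {0,1,…,n−1} with the natural order, and let Q be a partial quasi-pairing of V. If there exists v ∈ V such that {v, v+2} ∈ Q and {v+1, v+3} ∈ Q, and v̂_Q ∉ {v, v+3}, then {v, v+3} is a nontrivial module of Inv(underline(n), Q); in particular, Inv(underline(n), Q) is decomposable. -/

import Mathlib

open Set

/-- The arc relation of the tournament `Inv(underline(V), P)` obtained from the
transitive tournament on a linearly ordered type by reversing the arcs `(x,y)`
with `{x,y} ∈ P`. -/
def InvArc {α : Type*} [LinearOrder α] (P : Set (Set α)) (x y : α) : Prop :=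
  (x < y ∧ ({x, y} : Set α) ∉ P) ∨ (y < x ∧ ({x, y} : Set α) ∈ P)

/-- `M` is a module of the subtournament of `Inv(·, P)` induced on the vertex set `W`. -/
def IsModuleOn {α : Type*} [LinearOrder α] (P : Set (Set α)) (W M : Set α) : Prop :=
  M ⊆ W ∧ ∀ v ∈ W, v ∉ M →
    (∀ x ∈ M, InvArc P v x) ∨ (∀ x ∈ M, InvArc P x v)

/-- A subset of the vertex set `W` is trivial if it is empty, a singleton, or all of `W`. -/
def IsTrivialSubset {α : Type*} (W M : Set α) : Prop :=
  M = ∅ ∨ (∃ a, M = {a}) ∨ M = W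

/-- A nontrivial module of the tournament `Inv(·, P)` induced on `W`. -/
def IsNontrivialModuleOn {α : Type*} [LinearOrder α] (P : Set (Set α)) (W M : Set α) : Prop :=
  IsModuleOn P W M ∧ ¬ IsTrivialSubset W M

/-- The tournament `Inv(·, P)` induced on `W` is indecomposable: all its modules are trivial. -/
def IndecomposableOn {α : Type*} [LinearOrder α] (P : Set (Set α)) (W : Set α) : Prop :=
  ∀ M : Set α, IsModuleOn P W M → IsTrivialSubset W M

/-- The tournament `Inv(·, P)` induced on `W` is decomposable: it has a nontrivial module. -/
def DecomposableOn {α : Type*} [LinearOrder α] (P : Set (Set α)) (W : Set α) : Prop :=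
  ∃ M : Set α, IsNontrivialModuleOn P W M

/-- A co-module of the tournament `Inv(·, P)` on `W`: a subset `M` of `W` such that
`M` or `W ∖ M` is a nontrivial module. -/
def IsCoModuleOn {α : Type*} [LinearOrder α] (P : Set (Set α)) (W M : Set α) : Prop :=
  M ⊆ W ∧ (IsNontrivialModuleOn P W M ∨ IsNontrivialModuleOn P W (W \ M))

/-- `mc(underline(W))`: the family of minimal co-modules of the transitive tournament on `W`
(a minimal co-module contains no other co-module). -/
def mcOn {α : Type*} [LinearOrder α] (W : Set α) : Set (Set α) :=
  {M | IsCoModuleOn (∅ : Set (Set α)) W M ∧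
    ∀ C : Set α, IsCoModuleOn (∅ : Set (Set α)) W C → C ⊆ M → C = M}

/-- `S` is a transversal of the family `F`: it meets every member of `F`. -/
def TransversalOf {α : Type*} (S : Set α) (F : Set (Set α)) : Prop :=
  ∀ C ∈ F, (S ∩ C).Nonempty

/-- A partial pairing of `V`: a set of pairwise disjoint 2-element subsets of `V`. -/
def IsPartialPairingOn {α : Type*} (V : Set α) (P : Set (Set α)) : Prop :=
  (∀ B ∈ P, B ⊆ V ∧ B.ncard = 2) ∧
  ∀ B ∈ P, ∀ C ∈ P, B ≠ C → Disjoint B C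

/-- `I` is an interval of the totally ordered set `X`: every element of `X ∖ I` is greater
than all elements of `I` or smaller than all of them. -/
def IsIntervalOf {α : Type*} [LinearOrder α] (X I : Set α) : Prop :=
  I ⊆ X ∧ ∀ v ∈ X \ I, (∀ i ∈ I, v < i) ∨ (∀ i ∈ I, i < v)

/-- A nontrivial interval of `X`. -/
def IsNontrivialIntervalOf {α : Type*} [LinearOrder α] (X I : Set α) : Prop :=
  IsIntervalOf X I ∧ ¬ IsTrivialSubset X I

/-- A family of blocks `P` on the totally ordered set `X` is irreducible if no nontrivial
interval of `X` is a union of blocks of `P`. -/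
def IrreducibleOn {α : Type*} [LinearOrder α] (X : Set α) (P : Set (Set α)) : Prop :=
  ∀ R ⊆ P, ¬ IsNontrivialIntervalOf X (⋃₀ R)

/-- A partial quasi-pairing of `V`: a set `Q` of `m+1` two-element subsets of `V` (`m ≥ 1`)
whose union has size `2m+1`. -/
def IsPartialQuasiPairingOn {α : Type*} (V : Set α) (Q : Set (Set α)) : Prop :=
  (∀ B ∈ Q, B ⊆ V ∧ B.ncard = 2) ∧
  ∃ m : ℕ, 1 ≤ m ∧ (⋃₀ Q).ncard = 2 * m + 1 ∧ Q.ncard = m + 1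

/-- The distinguished data of a quasi-pairing `Q`: `vh = v̂_Q` is the element lying in the two
blocks `{vh, vm}` and `{vh, vp}` of `Q`, with `vm = v_Q^- < v_Q^+ = vp`. -/
def QPData {α : Type*} [LinearOrder α] (Q : Set (Set α)) (vh vm vp : α) : Prop :=
  ({vh, vm} : Set α) ∈ Q ∧ ({vh, vp} : Set α) ∈ Q ∧ vm < vp

/-- `Q_part`: the partition of `⋃₀ Q` obtained from `Q` by merging its two intersecting
blocks into `B_Q = {v̂_Q, v_Q^-, v_Q^+}`. -/
def QPart {α : Type*} [LinearOrder α] (Q : Set (Set α)) (vh vm vp : α) : Set (Set α) :=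
  (Q \ {({vh, vm} : Set α), ({vh, vp} : Set α)}) ∪ {({vh, vm, vp} : Set α)}

private lemma finite_of_two (B : Set ℕ) (h : B.ncard = 2) : B.Finite :=
  Set.finite_of_ncard_ne_zero (by omega)

private lemma aux_step (Q : Set (Set ℕ)) (hfin : Q.Finite) (hc : ∀ B ∈ Q, B.ncard = 2)
    (B : Set ℕ) (hB : B ∈ Q) (z : ℕ) (hz : z ∈ B) (hz2 : z ∈ ⋃₀ (Q \ {B})) :
    (⋃₀ Q).ncard ≤ (⋃₀ (Q \ {B})).ncard + 1 := by
  have hBfin : B.Finite := finite_of_two B (hc B hB)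
  have hrestfin : (⋃₀ (Q \ {B})).Finite :=
    Set.Finite.sUnion (hfin.diff) (fun C hC => finite_of_two C (hc C hC.1))
  have hU : ⋃₀ Q = B ∪ ⋃₀ (Q \ {B}) := by
    ext w
    simp only [Set.mem_sUnion, Set.mem_union, Set.mem_diff, Set.mem_singleton_iff]
    constructor
    · rintro ⟨t, ht, hw⟩
      by_cases h : t = B
      · exact Or.inl (h ▸ hw)
      · exact Or.inr ⟨t, ⟨ht, h⟩, hw⟩
    · rintro (h | ⟨t, ⟨ht, -⟩, hw⟩)
      · exact ⟨B, hB, h⟩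
      · exact ⟨t, ht, hw⟩
  have hsub : B \ ⋃₀ (Q \ {B}) ⊆ B \ {z} := by
    intro w hw
    exact ⟨hw.1, by simp only [Set.mem_singleton_iff]; rintro rfl; exact hw.2 hz2⟩
  have hle1 : (B \ ⋃₀ (Q \ {B})).ncard ≤ 1 := by
    have h1 : (B \ {z}).ncard = 1 := by
      rw [Set.ncard_diff_singleton_of_mem hz, hc B hB]
    calc (B \ ⋃₀ (Q \ {B})).ncard ≤ (B \ {z}).ncard :=
          Set.ncard_le_ncard hsub (hBfin.diff)
      _ = 1 := h1
  calc (⋃₀ Q).ncard = ((B \ ⋃₀ (Q \ {B})) ∪ ⋃₀ (Q \ {B})).ncard := by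
        rw [Set.diff_union_self, ← hU]
    _ ≤ (B \ ⋃₀ (Q \ {B})).ncard + (⋃₀ (Q \ {B})).ncard := Set.ncard_union_le _ _
    _ ≤ (⋃₀ (Q \ {B})).ncard + 1 := by omega

private lemma aux_total (Q : Set (Set ℕ)) (hfin : Q.Finite) :
    (∀ B ∈ Q, B.ncard = 2) → (⋃₀ Q).ncard ≤ 2 * Q.ncard := by
  refine Set.Finite.induction_on Q hfin (by simp) ?_
  intro B S hBS hSfin ih hc
  have hBfin : B.Finite := finite_of_two B (hc B (Set.mem_insert _ _))
  have hSU : (⋃₀ S).Finite :=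
    Set.Finite.sUnion hSfin (fun C hC => finite_of_two C (hc C (Set.mem_insert_of_mem _ hC)))
  have h1 : (⋃₀ insert B S).ncard ≤ B.ncard + (⋃₀ S).ncard := by
    rw [Set.sUnion_insert]; exact Set.ncard_union_le _ _
  have h2 := ih (fun C hC => hc C (Set.mem_insert_of_mem _ hC))
  have h3 : (insert B S).ncard = S.ncard + 1 := Set.ncard_insert_of_notMem hBS hSfin
  have h4 : B.ncard = 2 := hc B (Set.mem_insert _ _)
  omega

private lemma unique_dbl (Q : Set (Set ℕ)) (hfin : Q.Finite) (hc : ∀ B ∈ Q, B.ncard = 2)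
    (m : ℕ) (hm : 1 ≤ m) (hU : (⋃₀ Q).ncard = 2 * m + 1) (hQc : Q.ncard = m + 1)
    (x y : ℕ) (hxy : x ≠ y)
    (B C D E : Set ℕ) (hB : B ∈ Q) (hC : C ∈ Q) (hD : D ∈ Q) (hE : E ∈ Q)
    (hxB : x ∈ B) (hxC : x ∈ C) (hBC : B ≠ C)
    (hyD : y ∈ D) (hyE : y ∈ E) (hDE : D ≠ E) : False := by
  have key : ∀ B' C' : Set ℕ, B' ∈ Q → C' ∈ Q → x ∈ B' → x ∈ C' → B' ≠ C' →
      B' ≠ D → B' ≠ E → False := by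
    intro B' C' hB' hC' hxB' hxC' hB'C' hB'D hB'E
    have hmem1 : x ∈ ⋃₀ (Q \ {B'}) :=
      ⟨C', ⟨hC', by simpa using hB'C'.symm⟩, hxC'⟩
    have h1 := aux_step Q hfin hc B' hB' x hxB' hmem1
    have hfin1 : (Q \ {B'}).Finite := hfin.diff
    have hc1 : ∀ F ∈ Q \ {B'}, F.ncard = 2 := fun F hF => hc F hF.1
    have hD1 : D ∈ Q \ {B'} := ⟨hD, by simpa using hB'D.symm⟩
    have hmem2 : y ∈ ⋃₀ ((Q \ {B'}) \ {D}) :=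
      ⟨E, ⟨⟨hE, by simpa using hB'E.symm⟩, by simpa using hDE.symm⟩, hyE⟩
    have h2 := aux_step (Q \ {B'}) hfin1 hc1 D hD1 y hyD hmem2
    have h3 := aux_total ((Q \ {B'}) \ {D}) (hfin1.diff) (fun F hF => hc1 F hF.1)
    have hn1 : (Q \ {B'}).ncard = Q.ncard - 1 := Set.ncard_diff_singleton_of_mem hB'
    have hn2 : ((Q \ {B'}) \ {D}).ncard = (Q \ {B'}).ncard - 1 :=
      Set.ncard_diff_singleton_of_mem hD1
    omega
  by_cases h : B = D ∨ B = E
  · by_cases h' : C = D ∨ C = E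
    · -- B, C ∈ {D, E}, B ≠ C, so y ∈ B and y ∈ C
      have hyB : y ∈ B ∧ y ∈ C := by
        rcases h with rfl | rfl <;> rcases h' with rfl | rfl <;>
          first | exact absurd rfl hBC | exact ⟨by assumption, by assumption⟩
      have hxyB : ({x, y} : Set ℕ) ⊆ B := by
        rw [Set.insert_subset_iff]; exact ⟨hxB, by simpa using hyB.1⟩
      have hxyC : ({x, y} : Set ℕ) ⊆ C := by
        rw [Set.insert_subset_iff]; exact ⟨hxC, by simpa using hyB.2⟩
      have hp : ({x, y} : Set ℕ).ncard = 2 := Set.ncard_pair hxy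
      have e1 : ({x, y} : Set ℕ) = B :=
        Set.eq_of_subset_of_ncard_le hxyB (by rw [hc B hB, hp]) (finite_of_two B (hc B hB))
      have e2 : ({x, y} : Set ℕ) = C :=
        Set.eq_of_subset_of_ncard_le hxyC (by rw [hc C hC, hp]) (finite_of_two C (hc C hC))
      exact hBC (e1 ▸ e2)
    · push_neg at h'
      exact key C B hC hB hxC hxB hBC.symm h'.1 h'.2
  · push_neg at h
    exact key B C hB hC hxB hxC hBC h.1 h.2

/-- Let `n ≥ 5`, `V = {0, …, n−1}`, and `Q` a partial quasi-pairing of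
`V` with distinguished data `(vh, vm, vp)`. If there is `v ∈ V` with `{v, v+2} ∈ Q`,
`{v+1, v+3} ∈ Q`, and `v̂_Q ∉ {v, v+3}`, then `{v, v+3}` is a nontrivial module of
`Inv(underline(n), Q)`; in particular, `Inv(underline(n), Q)` is decomposable. -/
theorem stmt_15 (n : ℕ) (hn : 5 ≤ n) (Q : Set (Set ℕ))
    (hQ : IsPartialQuasiPairingOn (Set.Iio n) Q)
    (vh vm vp : ℕ) (hdata : QPData Q vh vm vp)
    (v : ℕ) (hv : v < n) (h1 : ({v, v + 2} : Set ℕ) ∈ Q)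
    (h2 : ({v + 1, v + 3} : Set ℕ) ∈ Q) (h3 : vh ≠ v ∧ vh ≠ v + 3) :
    IsNontrivialModuleOn Q (Set.Iio n) {v, v + 3} ∧ DecomposableOn Q (Set.Iio n) := by
  obtain ⟨hblocks, m, hm, hUc, hQc⟩ := hQ
  obtain ⟨hDQ, hEQ, hmp⟩ := hdata
  have hfin : Q.Finite := Set.finite_of_ncard_ne_zero (by omega)
  have hc : ∀ B ∈ Q, B.ncard = 2 := fun B hB => (hblocks B hB).2
  have hDEne : ({vh, vm} : Set ℕ) ≠ {vh, vp} := by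
    intro h
    have hvp : vp ∈ ({vh, vm} : Set ℕ) := by rw [h]; simp
    rcases hvp with h' | h'
    · have : ({vh, vp} : Set ℕ).ncard = 2 := hc _ hEQ
      rw [show vh = vp from h'.symm ▸ (h' ▸ rfl)] at this
      simp [Set.pair_eq_singleton] at this
    · simp only [Set.mem_singleton_iff] at h'
      omega
  have uniq : ∀ x (B C : Set ℕ), B ∈ Q → C ∈ Q → x ∈ B → x ∈ C → B ≠ C → x = vh := by
    intro x B C hB hC hxB hxC hBC
    by_contra hx
    exact unique_dbl Q hfin hc m hm hUc hQc x vh hx B C {vh, vm} {vh, vp}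
      hB hC hDQ hEQ hxB hxC hBC (Set.mem_insert _ _) (Set.mem_insert _ _) hDEne
  have Fv : ∀ w, w ≠ v + 2 → ({w, v} : Set ℕ) ∉ Q := by
    intro w hw hmem
    have hne : ({w, v} : Set ℕ) ≠ {v, v + 2} := by
      intro h
      have : v + 2 ∈ ({w, v} : Set ℕ) := by rw [h]; simp
      simp only [Set.mem_insert_iff, Set.mem_singleton_iff] at this
      omega
    exact h3.1 (uniq v _ _ hmem h1 (by simp) (by simp) hne).symm
  have Fv3 : ∀ w, w ≠ v + 1 → ({w, v + 3} : Set ℕ) ∉ Q := by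
    intro w hw hmem
    have hne : ({w, v + 3} : Set ℕ) ≠ {v + 1, v + 3} := by
      intro h
      have : v + 1 ∈ ({w, v + 3} : Set ℕ) := by rw [h]; simp
      simp only [Set.mem_insert_iff, Set.mem_singleton_iff] at this
      omega
    exact h3.2 (uniq (v + 3) _ _ hmem h2 (by simp) (by simp) hne).symm
  have hv3 : v + 3 < n := (hblocks _ h2).1 (by simp)
  have hmod : IsNontrivialModuleOn Q (Set.Iio n) {v, v + 3} := by
    constructor
    · constructor
      · intro x hx
        simp only [Set.mem_insert_iff, Set.mem_singleton_iff] at hx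
        rcases hx with rfl | rfl
        · exact hv
        · exact hv3
      · intro w hw hwM
        simp only [Set.mem_insert_iff, Set.mem_singleton_iff, not_or] at hwM
        have hcase : w < v ∨ w = v + 1 ∨ w = v + 2 ∨ v + 3 < w := by omega
        rcases hcase with h | h | h | h
        · left
          intro x hx
          simp only [Set.mem_insert_iff, Set.mem_singleton_iff] at hx
          rcases hx with h' | h'
          · rw [h']; exact Or.inl ⟨by omega, Fv w (by omega)⟩
          · rw [h']; exact Or.inl ⟨by omega, Fv3 w (by omega)⟩
        · subst h
          right
          intro x hx
          simp only [Set.mem_insert_iff, Set.mem_singleton_iff] at hx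
          rcases hx with h' | h'
          · rw [h']; exact Or.inl ⟨by omega, by rw [Set.pair_comm]; exact Fv (v + 1) (by omega)⟩
          · rw [h']; exact Or.inr ⟨by omega, by rw [Set.pair_comm]; exact h2⟩
        · subst h
          left
          intro x hx
          simp only [Set.mem_insert_iff, Set.mem_singleton_iff] at hx
          rcases hx with h' | h'
          · rw [h']; exact Or.inr ⟨by omega, by rw [Set.pair_comm]; exact h1⟩
          · rw [h']; exact Or.inl ⟨by omega, Fv3 (v + 2) (by omega)⟩
        · right
          intro x hx
          simp only [Set.mem_insert_iff, Set.mem_singleton_iff] at hx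
          rcases hx with h' | h'
          · rw [h']; exact Or.inl ⟨by omega, by rw [Set.pair_comm]; exact Fv w (by omega)⟩
          · rw [h']; exact Or.inl ⟨by omega, by rw [Set.pair_comm]; exact Fv3 w (by omega)⟩
    · rintro (h | ⟨a, h⟩ | h)
      · have : v ∈ (∅ : Set ℕ) := h ▸ (by simp)
        exact this.elim
      · have ha1 : v ∈ ({a} : Set ℕ) := h ▸ (by simp)
        have ha2 : v + 3 ∈ ({a} : Set ℕ) := h ▸ (by simp)
        simp only [Set.mem_singleton_iff] at ha1 ha2
        omega
      · obtain ⟨w, hw1, hw2, hw3⟩ : ∃ w, w < n ∧ w ≠ v ∧ w ≠ v + 3 := by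
          rcases Nat.eq_zero_or_pos v with rfl | hv0
          · exact ⟨1, by omega, by omega, by omega⟩
          · exact ⟨0, by omega, by omega, by omega⟩
        have : w ∈ ({v, v + 3} : Set ℕ) := by rw [h]; exact hw1
        simp only [Set.mem_insert_iff, Set.mem_singleton_iff] at this
        omega
  exact ⟨hmod, ⟨{v, v + 3}, hmod⟩⟩
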